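/- For all θ ≥ 1 and constants c ≥ exp(θ−1), the function x ↦ (log(x+c))^θ is concave on [0,∞). -/

import Mathlib

open Real Set

/-- For `θ ≥ 1` and `c ≥ exp(θ-1)`, the function `x ↦ (log(x+c))^θ`
is concave on `[0, ∞)`. -/
theorem stmt4 (θ c : ℝ) (hθ : 1 ≤ θ) (hc : Real.exp (θ - 1) ≤ c) :
    ConcaveOn ℝ (Set.Ici (0:ℝ)) (fun x : ℝ => (Real.log (x + c)) ^ θ) := by
  have hc1 : (1:ℝ) ≤ c := le_trans (Real.one_le_exp (by linarith)) hc
  set f' : ℝ → ℝ := fun x => (x + c)⁻¹ * θ * Real.log (x + c) ^ (θ - 1) with hf'def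
  set f'' : ℝ → ℝ := fun x =>
      (-((x + c) ^ 2)⁻¹) * (θ * Real.log (x + c) ^ (θ - 1)) +
      (x + c)⁻¹ * (θ * ((x + c)⁻¹ * (θ - 1) * Real.log (x + c) ^ (θ - 1 - 1))) with hf''def
  have hlogD : ∀ x : ℝ, 0 < x → 0 < Real.log (x + c) := fun x hx =>
    Real.log_pos (by linarith)
  have hL : ∀ x : ℝ, 0 < x → HasDerivAt (fun y : ℝ => Real.log (y + c)) ((x + c)⁻¹) x := by
    intro x hx
    have h := (Real.hasDerivAt_log (by linarith : x + c ≠ 0)).comp x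
      ((hasDerivAt_id x).add_const c)
    simp at h; exact h
  apply concaveOn_of_hasDerivWithinAt2_nonpos (f' := f') (f'' := f'') (convex_Ici 0)
  · -- continuity
    apply ContinuousOn.rpow_const
    · exact Real.continuousOn_log.comp (Continuous.continuousOn (by continuity))
        (fun x hx => by simp only [mem_compl_iff, mem_singleton_iff]; intro h; simp at hx; nlinarith)
    · intro x _; right; linarith
  · intro x hx
    rw [interior_Ici] at hx
    have hx0 : (0:ℝ) < x := hx
    have h := ((hL x hx0).rpow_const (p := θ) (Or.inl (ne_of_gt (hlogD x hx0))))
    exact h.hasDerivWithinAt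
  · intro x hx
    rw [interior_Ici] at hx
    have hx0 : (0:ℝ) < x := hx
    have hu : HasDerivAt (fun y : ℝ => (y + c)⁻¹) (-((x + c)^2)⁻¹) x := by
      have h := ((hasDerivAt_id x).add_const c).inv (by positivity : x + c ≠ 0)
      simp [neg_div, one_div] at h; exact h
    have hv : HasDerivAt (fun y : ℝ => θ * Real.log (y + c) ^ (θ - 1))
        (θ * ((x + c)⁻¹ * (θ - 1) * Real.log (x + c) ^ (θ - 1 - 1))) x :=
      ((hL x hx0).rpow_const (p := θ - 1) (Or.inl (ne_of_gt (hlogD x hx0)))).const_mul θ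
    have h := hu.mul hv
    have heq : f' = fun y : ℝ => (y + c)⁻¹ * (θ * Real.log (y + c) ^ (θ - 1)) := by
      funext y; simp [hf'def, mul_assoc]
    rw [heq]
    exact h.hasDerivWithinAt
  · intro x hx
    rw [interior_Ici] at hx
    have hx0 : (0:ℝ) < x := hx
    have hL0 : 0 < Real.log (x + c) := hlogD x hx0
    have hLge : θ - 1 ≤ Real.log (x + c) := by
      calc θ - 1 = Real.log (Real.exp (θ - 1)) := (Real.log_exp _).symm
        _ ≤ Real.log (x + c) :=
          Real.log_le_log (Real.exp_pos _) (by linarith)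
    have hsplit : Real.log (x + c) ^ (θ - 1) =
        Real.log (x + c) ^ (θ - 1 - 1) * Real.log (x + c) := by
      rw [← Real.rpow_add_one (ne_of_gt hL0)]; ring_nf
    have hxc0 : (0:ℝ) < x + c := by linarith
    have hP : (0:ℝ) ≤ Real.log (x + c) ^ (θ - 1 - 1) := (Real.rpow_pos_of_pos hL0 _).le
    have : f'' x = θ * ((x + c)^2)⁻¹ * (Real.log (x + c) ^ (θ - 1 - 1)) *
        ((θ - 1) - Real.log (x + c)) := by
      simp only [hf''def]
      rw [hsplit]
      field_simp
      ring
    rw [this]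
    have : (θ - 1) - Real.log (x + c) ≤ 0 := by linarith
    have hpos : 0 ≤ θ * ((x + c)^2)⁻¹ * (Real.log (x + c) ^ (θ - 1 - 1)) := by positivity
    exact mul_nonpos_of_nonneg_of_nonpos hpos this
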